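/- Let p be a prime and R ≥ 1 an integer. If g ∈ GL₂(ℚ_p) is such that Φ_R((0,a)·g) ≠ 0 for some a ∈ ℚ_p^× — in particular, whenever f_{Φ_R}(g; χ, s) ≠ 0 for some χ and s — then g ∈ B₂(ℚ_p)·K₀(p^R), i.e. g = b·k for some upper-triangular b ∈ GL₂(ℚ_p) and some k ∈ GL₂(ℤ_p) with k₂₁ ∈ p^Rℤ_p. -/

import Mathlib

noncomputable section

/-- The Schwartz function `Φ_R = ch((0,1) + p^Rℤ_p²) : ℚ_p² → ℂ`, the characteristic function
of the set of `(x,y)` with `x ∈ p^Rℤ_p` and `y ∈ 1 + p^Rℤ_p`. -/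
def PhiR (p : ℕ) [Fact p.Prime] (R : ℕ) : ℚ_[p] × ℚ_[p] → ℂ :=
  Set.indicator {xy : ℚ_[p] × ℚ_[p] |
    ‖xy.1‖ ≤ (p : ℝ) ^ (-(R : ℤ)) ∧ ‖xy.2 - 1‖ ≤ (p : ℝ) ^ (-(R : ℤ))} 1

/-- **Support of the Siegel section `f_{Φ_R}`.**
Let `p` be a prime and `R ≥ 1`.  If `g ∈ GL₂(ℚ_p)` is such that `Φ_R((0,a)·g) ≠ 0` for some
`a ∈ ℚ_p^×`, then `g ∈ B₂(ℚ_p)·K₀(p^R)`: that is, `g = b·k` with `b` upper-triangular and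
invertible, and `k ∈ GL₂(ℤ_p)` (all entries of norm `≤ 1` and `‖det k‖ = 1`) with
`k₂₁ ∈ p^Rℤ_p`. -/
theorem stmt_6 (p : ℕ) [Fact p.Prime] (R : ℕ) (hR : 1 ≤ R)
    (g : Matrix (Fin 2) (Fin 2) ℚ_[p]) (hg : IsUnit g)
    (a : ℚ_[p]) (ha : a ≠ 0)
    (hsupp : PhiR p R (a * g 1 0, a * g 1 1) ≠ 0) :
    ∃ b k : Matrix (Fin 2) (Fin 2) ℚ_[p],
      IsUnit b ∧ b 1 0 = 0 ∧
      (∀ i j, ‖k i j‖ ≤ 1) ∧ ‖k.det‖ = 1 ∧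
      ‖k 1 0‖ ≤ (p : ℝ) ^ (-(R : ℤ)) ∧
      g = b * k := by
  have hp1 : (1:ℝ) < (p:ℝ) := by exact_mod_cast (Fact.out : p.Prime).one_lt
  have hpR1 : (p : ℝ) ^ (-(R : ℤ)) < 1 := by
    exact zpow_lt_one_of_neg₀ hp1 (by omega)
  -- membership in the set
  have hmem : ‖a * g 1 0‖ ≤ (p : ℝ) ^ (-(R : ℤ)) ∧
      ‖a * g 1 1 - 1‖ ≤ (p : ℝ) ^ (-(R : ℤ)) := by
    by_contra h
    exact hsupp (Set.indicator_of_notMem h 1)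
  obtain ⟨h1, h2⟩ := hmem
  -- ‖a * g 1 1‖ = 1
  have hnorm11 : ‖a * g 1 1‖ = 1 := by
    have hlt : ‖a * g 1 1 - 1‖ < 1 := lt_of_le_of_lt h2 hpR1
    have : a * g 1 1 = (a * g 1 1 - 1) + 1 := by ring
    rw [this, Padic.add_eq_max_of_ne]
    · simp [le_of_lt hlt]
    · simpa using ne_of_lt hlt
  have hg11 : g 1 1 ≠ 0 := by
    intro h0
    rw [h0, mul_zero, norm_zero] at hnorm11
    norm_num at hnorm11
  set c := g 1 0 / g 1 1 with hc
  have hcnorm : ‖c‖ ≤ (p : ℝ) ^ (-(R : ℤ)) := by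
    have : c = (a * g 1 0) / (a * g 1 1) := by
      field_simp [hc]
      rw [hc, div_mul_cancel₀ _ hg11]
    rw [this, norm_div, hnorm11, div_one]
    exact h1
  have hk1 : (!![(1:ℚ_[p]), 0; -c, 1] : Matrix (Fin 2) (Fin 2) ℚ_[p]) * !![1, 0; c, 1] = 1 := by
    ext i j
    fin_cases i <;> fin_cases j <;>
      simp [Matrix.mul_apply, Fin.sum_univ_two, Matrix.one_apply]
  have hk2 : (!![(1:ℚ_[p]), 0; c, 1] : Matrix (Fin 2) (Fin 2) ℚ_[p]) * !![1, 0; -c, 1] = 1 := by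
    ext i j
    fin_cases i <;> fin_cases j <;>
      simp [Matrix.mul_apply, Fin.sum_univ_two, Matrix.one_apply]
  refine ⟨g * !![1, 0; -c, 1], !![1, 0; c, 1], ?_, ?_, ?_, ?_, ?_, ?_⟩
  · exact hg.mul ⟨⟨!![1, 0; -c, 1], !![1, 0; c, 1], hk1, hk2⟩, rfl⟩
  · have : (g * !![1, 0; -c, 1]) 1 0 = g 1 0 * 1 + g 1 1 * (-c) := by
      simp [Matrix.mul_apply, Fin.sum_univ_two]
    rw [this, hc]
    field_simp
    ring
  · intro i j
    fin_cases i <;> fin_cases j <;>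
      simp_all [le_trans hcnorm (le_of_lt hpR1)]
    exact le_trans hcnorm hpR1.le
  · simp [Matrix.det_fin_two]
  · simpa using hcnorm
  · rw [Matrix.mul_assoc, hk1, Matrix.mul_one]
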